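/- Let 𝔞 be a countable set of limit ordinals such that cf(θ) > 2^{ℵ₀} for every θ ∈ 𝔞, and let ∏𝔞 denote the set of functions f with domain 𝔞 satisfying f(θ) < θ for all θ ∈ 𝔞. Then there exist an ordinal i(*), a sequence ⟨J_i : i ≤ i(*)⟩ of ideals on 𝔞, a sequence ⟨𝔟_i : i < i(*)⟩ of subsets of 𝔞, and a sequence ⟨f̄^i : i < i(*)⟩ with f̄^i = ⟨f^i_α : α < α_i⟩, such that: (α) J_i is ⊆-increasing continuous in i, J_0 = {∅}, J_{i(*)} = P(𝔞), and J_{i+1} is the ideal generated by J_i ∪ {𝔟_i}; (β) each f^i_α ∈ ∏𝔞, f̄^i is <_{J_i}-increasing in α, and {f^i_α : α < α_i} is cofinal in (∏𝔞, <_{J′_i}) where J′_i is the ideal generated by J_i ∪ {𝔞 ∖ 𝔟_i}; and (γ) for every f ∈ ∏𝔞 there are n < ω and pairs (i_ℓ, γ_ℓ) for ℓ < n with i_ℓ < i(*) and γ_ℓ < α_{i_ℓ}, such that for every θ ∈ 𝔞 there is ℓ < n with f(θ) < f^{i_ℓ}_{γ_ℓ}(θ). -/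

import Mathlib

/-- `S` is an ideal on (the set) `X`: it contains `∅`, is downward closed under `⊆`,
and is closed under finite (binary) unions. -/
def IsIdealOn {X : Type*} (S : Set (Set X)) : Prop :=
  ∅ ∈ S ∧ (∀ x y : Set X, x ⊆ y → y ∈ S → x ∈ S) ∧
    ∀ x y : Set X, x ∈ S → y ∈ S → x ∪ y ∈ S

/-- The ideal generated by an ideal `J` together with one further set `b`. -/
def idealGen {X : Type*} (J : Set (Set X)) (b : Set X) : Set (Set X) :=
  {Z : Set X | ∃ x ∈ J, Z ⊆ x ∪ b}

namespace Stmt15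

open Ordinal Cardinal Set

noncomputable section

variable {X : Type 1} [Countable X] (v : X → Ordinal.{0}) (J : Set (Set X))

/-- bounded by `v` pointwise -/
def Bdd (f : X → Ordinal.{0}) : Prop := ∀ θ, f θ < v θ

lemma mem_of_subset_union {A B C : Set X} (hJ : IsIdealOn J)
    (h : A ⊆ B ∪ C) (hB : B ∈ J) (hC : C ∈ J) : A ∈ J :=
  hJ.2.1 _ _ h (hJ.2.2 _ _ hB hC)

open scoped Classical in
/-- Transfinite attempt at a `<_J`-increasing chain: at each stage choose a strict
mod-`J` upper bound of the history, if one exists. -/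
def chainAux : Ordinal.{0} → X → Ordinal.{0} :=
  Ordinal.lt_wf.fix
    (fun α ih =>
      if h : ∃ hf : X → Ordinal.{0}, Bdd v hf ∧
          ∀ β (hβ : β < α), {θ | hf θ ≤ ih β hβ θ} ∈ J
      then h.choose else fun _ => 0)

/-- the history up to `α` admits a strict mod-`J` upper bound in the product -/
def Good (α : Ordinal.{0}) : Prop :=
  ∃ hf : X → Ordinal.{0}, Bdd v hf ∧ ∀ β, β < α → {θ | hf θ ≤ chainAux v J β θ} ∈ J

open scoped Classical in
lemma chainAux_def (α : Ordinal.{0}) :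
    chainAux v J α = if h : Good v J α then h.choose else fun _ => 0 := by
  show Ordinal.lt_wf.fix _ α = _
  rw [WellFounded.fix_eq]
  rfl

lemma good_bdd {α : Ordinal.{0}} (h : Good v J α) : Bdd v (chainAux v J α) := by
  classical
  rw [chainAux_def, dif_pos h]; exact h.choose_spec.1

lemma good_mem {α β : Ordinal.{0}} (h : Good v J α) (hβ : β < α) :
    {θ | chainAux v J α θ ≤ chainAux v J β θ} ∈ J := by
  classical
  rw [chainAux_def, dif_pos h]; exact h.choose_spec.2 β hβ

lemma good_mono {α β : Ordinal.{0}} (hβα : β ≤ α) (h : Good v J α) : Good v J β := by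
  obtain ⟨hf, h1, h2⟩ := h
  exact ⟨hf, h1, fun γ hγ => h2 γ (lt_of_lt_of_le hγ hβα)⟩

variable {v J}

lemma exists_not_good (hP : Set.univ ∉ J) : ∃ α : Ordinal.{0}, ¬ Good v J α := by
  by_contra hall
  push_neg at hall
  have key : ∀ {γ δ : Ordinal.{0}}, δ < γ →
      (∀ θ, chainAux v J γ θ = chainAux v J δ θ) → False := by
    intro γ δ hlt heq
    have h1 : {θ | chainAux v J γ θ ≤ chainAux v J δ θ} = Set.univ := by
      ext θ; simp [heq θ]
    have h2 := good_mem v J (hall γ) hlt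
    rw [h1] at h2
    exact hP h2
  have hinj : Function.Injective
      (fun α : Ordinal.{0} => (fun θ : X => (⟨chainAux v J α θ, good_bdd v J (hall α) θ⟩ :
        ↥(Set.Iio (v θ))))) := by
    intro α β hαβ
    by_contra hne
    have heq : ∀ θ, chainAux v J α θ = chainAux v J β θ := by
      intro θ
      have := congrFun hαβ θ
      exact Subtype.ext_iff.mp this
    rcases (Ne.lt_or_gt hne) with h | h
    · exact key h (fun θ => (heq θ).symm)
    · exact key h heq
  exact not_small_ordinal.{0} (small_of_injective hinj)

/-- the first ordinal where the chain construction gets stuck -/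
def delta (v : X → Ordinal.{0}) (J : Set (Set X)) : Ordinal.{0} :=
  sInf {α | ¬ Good v J α}

lemma not_good_delta (hP : Set.univ ∉ J) : ¬ Good v J (delta v J) :=
  csInf_mem (exists_not_good hP)

lemma good_of_lt (hP : Set.univ ∉ J) {α : Ordinal.{0}} (h : α < delta v J) : Good v J α := by
  by_contra hng
  exact absurd (csInf_le' (s := {α | ¬ Good v J α}) hng) (not_le.mpr h)

lemma delta_pos (hv : ∀ θ, Order.IsSuccLimit (v θ)) (hP : Set.univ ∉ J) : 0 < delta v J := by
  have h0 : Good v J 0 :=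
    ⟨fun _ => 0, fun θ => (hv θ).pos, fun β hβ => absurd hβ (by simp)⟩
  rw [pos_iff_ne_zero]
  intro h
  exact not_good_delta hP (h ▸ h0)

/-- no short family is cofinal below `delta`: its cofinality exceeds the continuum -/
lemma cof_delta (hv : ∀ θ, Order.IsSuccLimit (v θ))
    (hc : ∀ θ, (2 : Cardinal.{0}) ^ Cardinal.aleph0 < (v θ).cof)
    (hJ : IsIdealOn J) (hP : Set.univ ∉ J) :
    (2 : Cardinal.{0}) ^ Cardinal.aleph0 < (delta v J).cof := by
  by_contra hle
  push_neg at hle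
  obtain ⟨ι, f, hlsub, hmk⟩ := Ordinal.exists_lsub_cof (delta v J)
  have hflt : ∀ i, f i < delta v J := fun i => hlsub ▸ Ordinal.lt_lsub f i
  let hfun : X → Ordinal.{0} := fun θ => iSup (fun i => chainAux v J (f i) θ) + 1
  have hsuplt : ∀ θ, iSup (fun i => chainAux v J (f i) θ) < v θ := by
    intro θ
    apply Ordinal.iSup_lt_ord (lt_of_le_of_lt (hmk ▸ hle) (hc θ))
    intro i
    exact good_bdd v J (good_of_lt hP (hflt i)) θ
  have hbdd : Bdd v hfun := by
    intro θ
    have := (hv θ).succ_lt (hsuplt θ)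
    rw [← Ordinal.add_one_eq_succ] at this
    exact this
  apply not_good_delta hP
  refine ⟨hfun, hbdd, fun β hβ => ?_⟩
  have : β < Ordinal.lsub f := hlsub.symm ▸ hβ
  obtain ⟨i, hile⟩ := Ordinal.lt_lsub_iff.mp this
  have hsub : {θ | hfun θ ≤ chainAux v J β θ} ⊆
      {θ | chainAux v J (f i) θ < chainAux v J β θ} := by
    intro θ hθ
    simp only [Set.mem_setOf_eq] at *
    calc chainAux v J (f i) θ ≤ iSup (fun i => chainAux v J (f i) θ) := Ordinal.le_iSup _ i
    _ < hfun θ := lt_add_one _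
    _ ≤ chainAux v J β θ := hθ
  rcases eq_or_lt_of_le hile with heq | hlt
  · have : {θ | hfun θ ≤ chainAux v J β θ} ⊆ (∅ : Set X) := by
      intro θ hθ
      have h3 := hsub hθ
      rw [heq] at h3
      simp only [Set.mem_setOf_eq] at h3
      exact absurd h3 (lt_irrefl _)
    exact hJ.2.1 _ _ this hJ.1
  · have hsub2 : {θ | hfun θ ≤ chainAux v J β θ} ⊆
        {θ | chainAux v J (f i) θ ≤ chainAux v J β θ} := by
      intro θ hθ
      have h4 : chainAux v J (f i) θ < chainAux v J β θ := hsub hθ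
      exact le_of_lt h4
    exact hJ.2.1 _ _ hsub2 (good_mem v J (good_of_lt hP (hflt i)) hlt)

/-- the constructed chain has no strict mod-`J` upper bound in the product -/
lemma no_ub (hP : Set.univ ∉ J) :
    ∀ h : X → Ordinal.{0}, Bdd v h → ∃ α, α < delta v J ∧ {θ | h θ ≤ chainAux v J α θ} ∉ J := by
  intro h hb
  by_contra hcon
  push_neg at hcon
  exact not_good_delta hP ⟨h, hb, fun β hβ => hcon β hβ⟩

variable (v J) in
/-- the set of coordinates where the `α`-th chain member strictly exceeds `g` -/
def Aset (g : X → Ordinal.{0}) (α : Ordinal.{0}) : Set X :=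
  {θ | g θ < chainAux v J α θ}

lemma Aset_diff_mem (hJ : IsIdealOn J) (hP : Set.univ ∉ J) (g : X → Ordinal.{0})
    {α β : Ordinal.{0}} (hαβ : α < β) (hβ : β < delta v J) :
    Aset v J g α \ Aset v J g β ∈ J := by
  apply hJ.2.1 _ {θ | chainAux v J β θ ≤ chainAux v J α θ}
  · rintro θ ⟨h1, h2⟩
    simp only [Aset, Set.mem_setOf_eq, not_lt] at h1 h2 ⊢
    exact h2.trans h1.le
  · exact good_mem v J (good_of_lt hP hβ) hαβ

/-- stabilization: some value of `Aset g ·` recurs cofinally below `delta` -/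
lemma exists_stabset (hv : ∀ θ, Order.IsSuccLimit (v θ))
    (hc : ∀ θ, (2 : Cardinal.{0}) ^ Cardinal.aleph0 < (v θ).cof)
    (hJ : IsIdealOn J) (hP : Set.univ ∉ J) (g : X → Ordinal.{0}) :
    ∃ S : Set X, ∀ β, β < delta v J → ∃ α, β ≤ α ∧ α < delta v J ∧ Aset v J g α = S := by
  by_contra hcon
  push_neg at hcon
  choose bet hbet1 hbet2 using hcon
  have hSetX : #(Shrink.{0} (Set X)) < (delta v J).cof := by
    have h1 : Cardinal.lift.{1} #(Shrink.{0} (Set X)) = #(Set X) :=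
      Cardinal.lift_mk_shrink''.{1,0} (Set X)
    have h2 : #(Set X) ≤ Cardinal.lift.{1} ((2 : Cardinal.{0}) ^ Cardinal.aleph0) := by
      rw [Cardinal.mk_set]
      have hlift : Cardinal.lift.{1} ((2 : Cardinal.{0}) ^ Cardinal.aleph0) =
          (2 : Cardinal.{1}) ^ Cardinal.aleph0 := by simp
      rw [hlift]
      exact Cardinal.power_le_power_left two_ne_zero Cardinal.mk_le_aleph0
    have h3 : #(Shrink.{0} (Set X)) ≤ (2 : Cardinal.{0}) ^ Cardinal.aleph0 := by
      rw [← Cardinal.lift_le.{1}, h1]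
      exact h2
    exact lt_of_le_of_lt h3 (cof_delta hv hc hJ hP)
  have e : Set X ≃ Shrink.{0} (Set X) := equivShrink.{0} (Set X)
  set B : Ordinal.{0} :=
    iSup (fun s : Shrink.{0} (Set X) => bet (e.symm s)) with hB_def
  have hB : B < delta v J :=
    Ordinal.iSup_lt_ord hSetX (fun s => hbet1 _)
  have hBle : bet (Aset v J g B) ≤ B := by
    have h5 := Ordinal.le_iSup (fun s : Shrink.{0} (Set X) => bet (e.symm s))
      (e (Aset v J g B))
    simpa using h5
  exact hbet2 (Aset v J g B) B hBle hB rfl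

/-- positivity of stabilized sets -/
lemma stab_pos (hv : ∀ θ, Order.IsSuccLimit (v θ)) (hJ : IsIdealOn J) (hP : Set.univ ∉ J)
    {g : X → Ordinal.{0}} (hg : Bdd v g) {S : Set X}
    (hS : ∀ β, β < delta v J → ∃ α, β ≤ α ∧ α < delta v J ∧ Aset v J g α = S) :
    S ∉ J := by
  intro hmem
  -- g+1 is bounded
  have hg1 : Bdd v (fun θ => g θ + 1) := by
    intro θ
    have := (hv θ).succ_lt (hg θ)
    rwa [← Ordinal.add_one_eq_succ] at this
  obtain ⟨α, hα, hpos⟩ := no_ub hP (fun θ => g θ + 1) hg1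
  apply hpos
  have hEq : {θ | g θ + 1 ≤ chainAux v J α θ} = Aset v J g α := by
    ext θ
    simp only [Set.mem_setOf_eq, Aset]
    rw [Ordinal.add_one_eq_succ, Order.succ_le_iff]
  rw [hEq]
  obtain ⟨α', hle, hlt', hstab⟩ := hS α hα
  rcases eq_or_lt_of_le hle with heq | hlt
  · rw [← heq] at hstab; rw [hstab]; exact hmem
  · have hdiff := Aset_diff_mem hJ hP g hlt hlt'
    rw [hstab] at hdiff
    apply mem_of_subset_union J hJ (C := S) _ hdiff hmem
    intro θ hθ
    by_cases hS' : θ ∈ S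
    · exact Or.inr hS'
    · exact Or.inl ⟨hθ, hS'⟩

/-- monotonicity of stabilized sets: pointwise larger functions have mod-`J` smaller sets -/
lemma stab_mono (hJ : IsIdealOn J) (hP : Set.univ ∉ J)
    {g g' : X → Ordinal.{0}} (hgg' : ∀ θ, g θ ≤ g' θ) {S S' : Set X}
    (hS : ∀ β, β < delta v J → ∃ α, β ≤ α ∧ α < delta v J ∧ Aset v J g α = S)
    (hS' : ∀ β, β < delta v J → ∃ α, β ≤ α ∧ α < delta v J ∧ Aset v J g' α = S')
    (hδ : 0 < delta v J) :
    S' \ S ∈ J := by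
  obtain ⟨α, -, hα, hstab'⟩ := hS' 0 hδ
  obtain ⟨α', hle, hα', hstab⟩ := hS α hα
  have h1 : S' ⊆ Aset v J g α := by
    rw [← hstab']
    intro θ hθ
    exact lt_of_le_of_lt (hgg' θ) hθ
  rcases eq_or_lt_of_le hle with heq | hlt
  · apply hJ.2.1 _ _ _ hJ.1
    rw [← heq] at hstab
    rintro θ ⟨hθ1, hθ2⟩
    exact absurd (hstab ▸ h1 hθ1) hθ2
  · have hdiff := Aset_diff_mem hJ hP g hlt hα'
    rw [hstab] at hdiff
    apply hJ.2.1 _ _ _ hdiff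
    rintro θ ⟨hθ1, hθ2⟩
    exact ⟨h1 hθ1, hθ2⟩

/-- auxiliary recursion: keep strictly increasing, applying a "witness" operator `w` -/
def minAux (w : (X → Ordinal.{0}) → (X → Ordinal.{0})) : Ordinal.{0} → X → Ordinal.{0} :=
  Ordinal.lt_wf.fix
    (fun ξ ih =>
      let H : X → Ordinal.{0} := fun θ => Ordinal.bsup ξ (fun η hη => ih η hη θ) + 1
      fun θ => max (H θ) (w H θ))

lemma minAux_def (w : (X → Ordinal.{0}) → (X → Ordinal.{0})) (ξ : Ordinal.{0}) :
    minAux w ξ = fun θ =>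
      max (Ordinal.bsup ξ (fun η _ => minAux w η θ) + 1)
        (w (fun θ => Ordinal.bsup ξ (fun η _ => minAux w η θ) + 1) θ) := by
  show Ordinal.lt_wf.fix _ ξ = _
  rw [WellFounded.fix_eq]
  rfl

/-- Extraction of a mod-`J` minimal stabilized set. -/
lemma exists_min_stab (hv : ∀ θ, Order.IsSuccLimit (v θ))
    (hc : ∀ θ, (2 : Cardinal.{0}) ^ Cardinal.aleph0 < (v θ).cof)
    (hJ : IsIdealOn J) (hP : Set.univ ∉ J)
    (Sg : (X → Ordinal.{0}) → Set X)
    (hSg : ∀ g, Bdd v g → ∀ β, β < delta v J →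
      ∃ α, β ≤ α ∧ α < delta v J ∧ Aset v J g α = Sg g) :
    ∃ gstar, Bdd v gstar ∧ ∀ g, Bdd v g → Sg gstar \ Sg g ∈ J := by
  by_contra hcon
  push_neg at hcon
  -- choose witnesses
  have hw : ∀ h : X → Ordinal.{0}, ∃ g, (Bdd v h → (Bdd v g ∧ Sg h \ Sg g ∉ J)) := by
    intro h
    by_cases hb : Bdd v h
    · obtain ⟨g, hg1, hg2⟩ := hcon h hb
      exact ⟨g, fun _ => ⟨hg1, hg2⟩⟩
    · exact ⟨h, fun hb' => absurd hb' hb⟩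
  choose w hwspec using hw
  set Λ : Ordinal.{0} := (Order.succ ((2 : Cardinal.{0}) ^ Cardinal.aleph0)).ord with hΛ
  set G : Ordinal.{0} → X → Ordinal.{0} := minAux w with hG
  -- boundedness of all stages below Λ
  have hbdd : ∀ ξ, ξ < Λ → Bdd v (G ξ) := by
    intro ξ
    induction ξ using Ordinal.induction with
    | _ ξ ih =>
      intro hξ
      have hHbdd : Bdd v (fun θ => Ordinal.bsup ξ (fun η _ => G η θ) + 1) := by
        intro θ
        have hb : Ordinal.bsup ξ (fun η _ => G η θ) < v θ := by
          apply Ordinal.bsup_lt_ord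
          · have : ξ.card < Order.succ ((2 : Cardinal.{0}) ^ Cardinal.aleph0) :=
              Cardinal.lt_ord.mp (hΛ ▸ hξ)
            exact lt_of_le_of_lt (Order.lt_succ_iff.mp this) (hc θ)
          · intro η hη
            exact ih η hη (hη.trans hξ) θ
        have := (hv θ).succ_lt hb
        rwa [← Ordinal.add_one_eq_succ] at this
      intro θ
      rw [hG, minAux_def]
      apply max_lt (hHbdd θ)
      exact (hwspec _ hHbdd).1 θ
  -- injectivity of ξ ↦ Sg (G ξ) below Λ
  have hinjon : ∀ ξ η, η < ξ → ξ < Λ → Sg (G η) ≠ Sg (G ξ) := by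
    intro ξ η hηξ hξ hEq
    set H : X → Ordinal.{0} := fun θ => Ordinal.bsup ξ (fun η _ => G η θ) + 1 with hH
    have hHbdd : Bdd v H := by
      intro θ
      have hb : Ordinal.bsup ξ (fun η _ => G η θ) < v θ := by
        apply Ordinal.bsup_lt_ord
        · have : ξ.card < Order.succ ((2 : Cardinal.{0}) ^ Cardinal.aleph0) :=
            Cardinal.lt_ord.mp (hΛ ▸ hξ)
          exact lt_of_le_of_lt (Order.lt_succ_iff.mp this) (hc θ)
        · intro η' hη'
          exact hbdd η' (hη'.trans hξ) θ
      have := (hv θ).succ_lt hb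
      rwa [← Ordinal.add_one_eq_succ] at this
    have hwb := hwspec H hHbdd
    have hGξ : G ξ = fun θ => max (H θ) (w H θ) := by rw [hG, minAux_def]
    have hδ : 0 < delta v J := delta_pos hv hP
    -- G η ≤ H pointwise
    have h1 : ∀ θ, G η θ ≤ H θ := by
      intro θ
      calc G η θ ≤ Ordinal.bsup ξ (fun η _ => G η θ) := Ordinal.le_bsup _ η hηξ
      _ ≤ H θ := (lt_add_one _).le
    -- w H ≤ G ξ and H ≤ G ξ pointwise
    have h2 : ∀ θ, w H θ ≤ G ξ θ := by intro θ; rw [hGξ]; exact le_max_right _ _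
    have m1 : Sg H \ Sg (G η) ∈ J :=
      stab_mono hJ hP h1 (hSg (G η) (hbdd η (hηξ.trans hξ))) (hSg H hHbdd) hδ
    have m2 : Sg (G ξ) \ Sg (w H) ∈ J :=
      stab_mono hJ hP h2 (hSg (w H) hwb.1) (hSg (G ξ) (hbdd ξ hξ)) hδ
    apply hwb.2
    apply mem_of_subset_union J hJ _ m1 m2
    intro θ hθ
    by_cases hc2 : θ ∈ Sg (G η)
    · exact Or.inr ⟨hEq ▸ hc2, hθ.2⟩
    · exact Or.inl ⟨hθ.1, hc2⟩
  -- pigeonhole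
  have hinj : Function.Injective (fun ξ : ↥(Set.Iio Λ) => Sg (G ξ.1)) := by
    rintro ⟨ξ, hξ⟩ ⟨η, hη⟩ hEq
    have hEq' : Sg (G ξ) = Sg (G η) := hEq
    by_contra hne
    have hne' : ξ ≠ η := fun h => hne (by simpa using h)
    rcases Ne.lt_or_gt hne' with h | h
    · exact hinjon η ξ h hη hEq'
    · exact hinjon ξ η h hξ hEq'.symm
  have hcard := Cardinal.mk_le_of_injective hinj
  rw [Ordinal.mk_Iio_ordinal, hΛ, Cardinal.card_ord, Cardinal.lift_succ] at hcard
  have h2 : #(Set X) ≤ Cardinal.lift.{1} ((2 : Cardinal.{0}) ^ Cardinal.aleph0) := by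
    rw [Cardinal.mk_set]
    have hlift : Cardinal.lift.{1} ((2 : Cardinal.{0}) ^ Cardinal.aleph0) =
        (2 : Cardinal.{1}) ^ Cardinal.aleph0 := by simp
    rw [hlift]
    exact Cardinal.power_le_power_left two_ne_zero Cardinal.mk_le_aleph0
  have := hcard.trans h2
  exact absurd ((Order.succ_le_iff).mp this) (lt_irrefl _)

variable (v J) in
/-- the data produced at each step of the main construction -/
def StepSpec (t : Ordinal.{0} × Set X × (Ordinal.{0} → X → Ordinal.{0})) : Prop :=
  t.2.1 ∉ J ∧ (∀ α, α < t.1 → ∀ θ, t.2.2 α θ < v θ) ∧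
  (∀ α β, α < β → β < t.1 → {θ | t.2.2 β θ ≤ t.2.2 α θ} ∈ J) ∧
  (∀ g : X → Ordinal.{0}, (∀ θ, g θ < v θ) →
    ∃ α, α < t.1 ∧ {θ | t.2.2 α θ ≤ g θ} ∈ idealGen J (t.2.1)ᶜ)

/-- MAIN LEMMA: every proper ideal admits a generator together with an increasing chain
cofinal modulo the extended ideal. -/
lemma mainLemma (hv : ∀ θ, Order.IsSuccLimit (v θ))
    (hc : ∀ θ, (2 : Cardinal.{0}) ^ Cardinal.aleph0 < (v θ).cof)
    (hJ : IsIdealOn J) (hP : Set.univ ∉ J) :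
    ∃ t, StepSpec v J t := by
  have hδ : 0 < delta v J := delta_pos hv hP
  -- stabilized sets for every bounded g (choice)
  have hstab : ∀ g : X → Ordinal.{0},
      ∃ S : Set X, ∀ β, β < delta v J → ∃ α, β ≤ α ∧ α < delta v J ∧ Aset v J g α = S :=
    fun g => exists_stabset hv hc hJ hP g
  choose Sg hSg using hstab
  obtain ⟨gstar, hgstar, hmin⟩ :=
    exists_min_stab hv hc hJ hP Sg (fun g _ => hSg g)
  refine ⟨⟨delta v J, Sg gstar, chainAux v J⟩, ?_, ?_, ?_, ?_⟩
  · exact stab_pos hv hJ hP hgstar (hSg gstar)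
  · intro α hα θ
    exact good_bdd v J (good_of_lt hP hα) θ
  · intro α β hαβ hβ
    exact good_mem v J (good_of_lt hP hβ) hαβ
  · intro g hg
    obtain ⟨α, -, hα, hAeq⟩ := hSg g 0 hδ
    refine ⟨α, hα, Sg gstar \ Sg g, hmin g hg, ?_⟩
    intro θ hθ
    simp only [Set.mem_setOf_eq] at hθ
    have hnotA : θ ∉ Aset v J g α := by
      intro hA
      exact absurd hθ (not_le.mpr hA)
    rw [hAeq] at hnotA
    by_cases hbs : θ ∈ Sg gstar
    · exact Or.inl ⟨hbs, hnotA⟩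
    · exact Or.inr hbs

open scoped Classical in
/-- one step of the construction, as a function of the current ideal -/
def step (hv : ∀ θ, Order.IsSuccLimit (v θ))
    (hc : ∀ θ, (2 : Cardinal.{0}) ^ Cardinal.aleph0 < (v θ).cof)
    (J : Set (Set X)) : Ordinal.{0} × Set X × (Ordinal.{0} → X → Ordinal.{0}) :=
  if h : IsIdealOn J ∧ Set.univ ∉ J
  then (mainLemma hv hc h.1 h.2).choose
  else ⟨0, ∅, fun _ _ => 0⟩

lemma step_spec (hv : ∀ θ, Order.IsSuccLimit (v θ))
    (hc : ∀ θ, (2 : Cardinal.{0}) ^ Cardinal.aleph0 < (v θ).cof)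
    {J : Set (Set X)} (hJ : IsIdealOn J) (hP : Set.univ ∉ J) :
    StepSpec v J (step hv hc J) := by
  classical
  rw [step, dif_pos ⟨hJ, hP⟩]
  exact (mainLemma hv hc hJ hP).choose_spec

variable (hv : ∀ θ, Order.IsSuccLimit (v θ))
    (hc : ∀ θ, (2 : Cardinal.{0}) ^ Cardinal.aleph0 < (v θ).cof)

/-- the increasing continuous sequence of ideals -/
def JJ (i : Ordinal.{0}) : Set (Set X) :=
  Ordinal.limitRecOn i {∅}
    (fun _ Ji => idealGen Ji (step hv hc Ji).2.1)
    (fun o _ ih => ⋃ j, ⋃ (h : j < o), ih j h)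

lemma JJ_zero : JJ hv hc 0 = {∅} := Ordinal.limitRecOn_zero ..

lemma JJ_succ (i : Ordinal.{0}) :
    JJ hv hc (i + 1) = idealGen (JJ hv hc i) (step hv hc (JJ hv hc i)).2.1 := by
  rw [Ordinal.add_one_eq_succ]
  exact Ordinal.limitRecOn_succ ..

lemma JJ_limit {i : Ordinal.{0}} (hi : Order.IsSuccLimit i) :
    JJ hv hc i = ⋃ j ∈ Set.Iio i, JJ hv hc j := by
  have := Ordinal.limitRecOn_limit i ({∅} : Set (Set X))
    (fun _ Ji => idealGen Ji (step hv hc Ji).2.1)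
    (fun o _ ih => ⋃ j, ⋃ (h : j < o), ih j h) hi
  rw [JJ, this]
  simp only [Set.mem_Iio]
  rfl

lemma self_subset_idealGen (J : Set (Set X)) (b : Set X) (hJ : IsIdealOn J) :
    J ⊆ idealGen J b := by
  intro Z hZ
  exact ⟨Z, hZ, fun θ hθ => Or.inl hθ⟩

lemma idealGen_isIdeal (J : Set (Set X)) (b : Set X) (hJ : IsIdealOn J) :
    IsIdealOn (idealGen J b) := by
  refine ⟨⟨∅, hJ.1, by simp⟩, ?_, ?_⟩
  · rintro x y hxy ⟨z, hz, hyz⟩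
    exact ⟨z, hz, hxy.trans hyz⟩
  · rintro x y ⟨z, hz, hxz⟩ ⟨z', hz', hyz'⟩
    refine ⟨z ∪ z', hJ.2.2 _ _ hz hz', ?_⟩
    intro θ hθ
    rcases hθ with h | h
    · rcases hxz h with h' | h'
      · exact Or.inl (Or.inl h')
      · exact Or.inr h'
    · rcases hyz' h with h' | h'
      · exact Or.inl (Or.inr h')
      · exact Or.inr h'

lemma JJ_mono : ∀ j i : Ordinal.{0}, i ≤ j → JJ hv hc i ⊆ JJ hv hc j := by
  intro j
  induction j using Ordinal.induction with
  | _ j ih =>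
    intro i hij
    rcases Ordinal.zero_or_succ_or_isSuccLimit j with h0 | ⟨k, hk⟩ | hlim
    · subst h0
      rw [nonpos_iff_eq_zero.mp hij]
    · subst hk
      rw [← Ordinal.add_one_eq_succ] at *
      rcases eq_or_lt_of_le hij with heq | hlt
      · rw [heq]
      · have hik : i ≤ k := by
          rw [Ordinal.add_one_eq_succ] at hlt
          exact Order.le_of_lt_succ hlt
        refine (ih k (by rw [Ordinal.add_one_eq_succ]; exact Order.lt_succ k) i hik).trans ?_
        rw [JJ_succ]
        intro Z hZ
        exact ⟨Z, hZ, fun θ hθ => Or.inl hθ⟩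
    · rcases eq_or_lt_of_le hij with heq | hlt
      · rw [heq]
      · rw [JJ_limit hv hc hlim]
        intro Z hZ
        exact Set.mem_biUnion hlt hZ

lemma JJ_isIdeal : ∀ i : Ordinal.{0}, IsIdealOn (JJ hv hc i) := by
  intro i
  induction i using Ordinal.induction with
  | _ i ih =>
    rcases Ordinal.zero_or_succ_or_isSuccLimit i with h0 | ⟨k, hk⟩ | hlim
    · subst h0
      rw [JJ_zero]
      refine ⟨rfl, ?_, ?_⟩
      · intro x y hxy hy
        simp only [Set.mem_singleton_iff] at *
        subst hy
        exact Set.subset_eq_empty hxy rfl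
      · intro x y hx hy
        simp only [Set.mem_singleton_iff] at *
        subst hx; subst hy; simp
    · subst hk
      rw [← Ordinal.add_one_eq_succ]
      rw [JJ_succ]
      exact idealGen_isIdeal _ _ (ih k (Order.lt_succ k))
    · rw [JJ_limit hv hc hlim]
      refine ⟨?_, ?_, ?_⟩
      · refine Set.mem_biUnion (show (0:Ordinal.{0}) ∈ Set.Iio i from hlim.pos) ?_
        rw [JJ_zero]; rfl
      · intro x y hxy hy
        obtain ⟨j, hj, hmem⟩ := Set.mem_iUnion₂.mp hy
        exact Set.mem_biUnion hj ((ih j hj).2.1 x y hxy hmem)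
      · intro x y hx hy
        obtain ⟨j, hj, hmemx⟩ := Set.mem_iUnion₂.mp hx
        obtain ⟨j', hj', hmemy⟩ := Set.mem_iUnion₂.mp hy
        rcases le_total j j' with hle | hle
        · exact Set.mem_biUnion hj' ((ih j' hj').2.2 x y (JJ_mono hv hc j' j hle hmemx) hmemy)
        · exact Set.mem_biUnion hj ((ih j hj).2.2 x y hmemx (JJ_mono hv hc j j' hle hmemy))

lemma exists_univ_mem : ∃ i : Ordinal.{0}, Set.univ ∈ JJ hv hc i := by
  by_contra hall
  push_neg at hall
  have hstep : ∀ i, StepSpec v (JJ hv hc i) (step hv hc (JJ hv hc i)) :=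
    fun i => step_spec hv hc (JJ_isIdeal hv hc i) (hall i)
  have hmem : ∀ i, (step hv hc (JJ hv hc i)).2.1 ∈ JJ hv hc (i + 1) := by
    intro i
    rw [JJ_succ]
    exact ⟨∅, (JJ_isIdeal hv hc i).1, by simp⟩
  have hinj : Function.Injective (fun i : Ordinal.{0} => (step hv hc (JJ hv hc i)).2.1) := by
    intro i j hEq
    by_contra hne
    have key : ∀ {i' j' : Ordinal.{0}}, i' < j' →
        (step hv hc (JJ hv hc i')).2.1 = (step hv hc (JJ hv hc j')).2.1 → False := by
      intro i' j' hlt hEq'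
      have h1 : (step hv hc (JJ hv hc i')).2.1 ∈ JJ hv hc j' := by
        apply JJ_mono hv hc j' (i' + 1) _ (hmem i')
        rw [Ordinal.add_one_eq_succ]
        exact Order.succ_le_of_lt hlt
      rw [hEq'] at h1
      exact (hstep j').1 h1
    rcases Ne.lt_or_gt hne with h | h
    · exact key h hEq
    · exact key h hEq.symm
  exact not_small_ordinal.{0} (small_of_injective (β := Set X) hinj)

/-- the length of the construction -/
def istar : Ordinal.{0} := sInf {i | Set.univ ∈ JJ hv hc i}

lemma univ_mem_istar : Set.univ ∈ JJ hv hc (istar hv hc) :=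
  csInf_mem (exists_univ_mem hv hc)

lemma proper_of_lt_istar {i : Ordinal.{0}} (h : i < istar hv hc) :
    Set.univ ∉ JJ hv hc i := by
  intro hmem
  exact absurd (csInf_le' (s := {i | Set.univ ∈ JJ hv hc i}) hmem) (not_le.mpr h)

lemma JJ_istar_univ : JJ hv hc (istar hv hc) = Set.univ := by
  apply Set.eq_univ_of_forall
  intro Z
  exact (JJ_isIdeal hv hc _).2.1 Z Set.univ (Set.subset_univ Z) (univ_mem_istar hv hc)

lemma gamma_aux : ∀ i : Ordinal.{0}, i ≤ istar hv hc → ∀ Z ∈ JJ hv hc i,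
    ∀ g : X → Ordinal.{0}, (∀ θ, g θ < v θ) →
    ∃ l : List (Ordinal.{0} × Ordinal.{0}),
      (∀ p ∈ l, p.1 < istar hv hc ∧ p.2 < (step hv hc (JJ hv hc p.1)).1) ∧
      ∀ θ ∈ Z, ∃ p ∈ l, g θ < (step hv hc (JJ hv hc p.1)).2.2 p.2 θ := by
  intro i
  induction i using Ordinal.induction with
  | _ i ih =>
    intro hi Z hZ g hg
    rcases Ordinal.zero_or_succ_or_isSuccLimit i with h0 | ⟨k, hk⟩ | hlim
    · subst h0
      rw [JJ_zero] at hZ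
      simp only [Set.mem_singleton_iff] at hZ
      subst hZ
      exact ⟨[], by simp, fun θ hθ => absurd hθ (Set.notMem_empty θ)⟩
    · subst hk
      have hki : k < istar hv hc := lt_of_lt_of_le (Order.lt_succ k) hi
      have hspec := step_spec hv hc (JJ_isIdeal hv hc k) (proper_of_lt_istar hv hc hki)
      rw [← Ordinal.add_one_eq_succ, JJ_succ] at hZ
      obtain ⟨x, hx, hZx⟩ := hZ
      obtain ⟨α, hα, hE⟩ := hspec.2.2.2 g hg
      obtain ⟨x', hx', hEsub⟩ := hE
      have hx'' : x ∪ x' ∈ JJ hv hc k := (JJ_isIdeal hv hc k).2.2 _ _ hx hx'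
      obtain ⟨l₀, hl₀1, hl₀2⟩ := ih k (Order.lt_succ k) (le_of_lt hki) (x ∪ x') hx'' g hg
      refine ⟨(k, α) :: l₀, ?_, ?_⟩
      · intro p hp
        rcases List.mem_cons.mp hp with h | h
        · subst h; exact ⟨hki, hα⟩
        · exact hl₀1 p h
      · intro θ hθ
        by_cases hmem : θ ∈ x ∪ x'
        · obtain ⟨p, hp, hgp⟩ := hl₀2 θ hmem
          exact ⟨p, List.mem_cons_of_mem _ hp, hgp⟩
        · have hbk : θ ∈ (step hv hc (JJ hv hc k)).2.1 := by
            rcases hZx hθ with h | h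
            · exact absurd (Or.inl h) hmem
            · exact h
          refine ⟨(k, α), List.mem_cons_self, ?_⟩
          by_contra hle
          push_neg at hle
          have hθE : θ ∈ {θ | (step hv hc (JJ hv hc k)).2.2 α θ ≤ g θ} := hle
          rcases hEsub hθE with h | h
          · exact hmem (Or.inr h)
          · exact h hbk
    · rw [JJ_limit hv hc hlim] at hZ
      obtain ⟨j, hj, hmem⟩ := Set.mem_iUnion₂.mp hZ
      exact ih j hj (le_of_lt (lt_of_lt_of_le hj hi)) Z hmem g hg

end

end Stmt15


/-- for a countable set `𝔞` of limit ordinals with `cf θ > 2^ℵ₀` for all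
`θ ∈ 𝔞` there are `i(*)`, an increasing continuous sequence of ideals
`⟨J_i : i ≤ i(*)⟩` with `J_0 = {∅}`, `J_{i(*)} = P(𝔞)`, `J_{i+1}` generated by
`J_i ∪ {𝔟_i}`, together with sequences `f̄^i = ⟨f^i_α : α < α_i⟩` in `∏𝔞` which are
`<_{J_i}`-increasing and cofinal in `(∏𝔞, <_{J_i + (𝔞∖𝔟_i)})`, such that every `f ∈ ∏𝔞`
is dominated by the pointwise maximum of finitely many of the `f^{i_ℓ}_{γ_ℓ}`. -/
theorem stmt15 (a : Set Ordinal.{0}) (hcount : a.Countable)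
    (hlim : ∀ θ ∈ a, Order.IsSuccLimit θ)
    (hcof : ∀ θ ∈ a, (2 : Cardinal.{0}) ^ Cardinal.aleph0 < (Ordinal.cof θ)) :
    ∃ (istar : Ordinal.{0}) (J : Ordinal.{0} → Set (Set ↥a)) (b : Ordinal.{0} → Set ↥a)
      (A : Ordinal.{0} → Ordinal.{0}) (F : Ordinal.{0} → Ordinal.{0} → (↥a → Ordinal.{0})),
      -- (α) the sequence of ideals
      (∀ i ≤ istar, IsIdealOn (J i)) ∧
      (∀ i j, i ≤ j → j ≤ istar → J i ⊆ J j) ∧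
      (∀ i ≤ istar, Order.IsSuccLimit i → J i = ⋃ j ∈ Set.Iio i, J j) ∧
      J 0 = {∅} ∧ J istar = Set.univ ∧
      (∀ i < istar, J (i + 1) = idealGen (J i) (b i)) ∧
      -- (β) the matrix of functions
      (∀ i < istar, ∀ α < A i, ∀ θ : ↥a, F i α θ < (θ : Ordinal)) ∧
      (∀ i < istar, ∀ α β : Ordinal, α < β → β < A i →
        {θ : ↥a | F i β θ ≤ F i α θ} ∈ J i) ∧
      (∀ i < istar, ∀ g : ↥a → Ordinal, (∀ θ : ↥a, g θ < (θ : Ordinal)) →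
        ∃ α < A i, {θ : ↥a | F i α θ ≤ g θ} ∈ idealGen (J i) (b i)ᶜ) ∧
      -- (γ) finitely many functions dominate any given one
      (∀ g : ↥a → Ordinal, (∀ θ : ↥a, g θ < (θ : Ordinal)) →
        ∃ (n : ℕ) (idx : Fin n → Ordinal.{0} × Ordinal.{0}),
          (∀ ℓ, (idx ℓ).1 < istar ∧ (idx ℓ).2 < A (idx ℓ).1) ∧
          ∀ θ : ↥a, ∃ ℓ, g θ < F (idx ℓ).1 (idx ℓ).2 θ) := by
  haveI : Countable ↥a := hcount.to_subtype
  set v : ↥a → Ordinal.{0} := fun θ => (θ : Ordinal) with hv_def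
  have hv : ∀ θ : ↥a, Order.IsSuccLimit (v θ) := fun θ => hlim θ.1 θ.2
  have hc : ∀ θ : ↥a, (2 : Cardinal.{0}) ^ Cardinal.aleph0 < (v θ).cof :=
    fun θ => hcof θ.1 θ.2
  refine ⟨Stmt15.istar hv hc, Stmt15.JJ hv hc,
    fun i => (Stmt15.step (v := v) hv hc (Stmt15.JJ hv hc i)).2.1,
    fun i => (Stmt15.step (v := v) hv hc (Stmt15.JJ hv hc i)).1,
    fun i => (Stmt15.step (v := v) hv hc (Stmt15.JJ hv hc i)).2.2,
    ?_, ?_, ?_, ?_, ?_, ?_, ?_, ?_, ?_, ?_⟩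
  · exact fun i _ => Stmt15.JJ_isIdeal hv hc i
  · exact fun i j hij _ => Stmt15.JJ_mono hv hc j i hij
  · exact fun i _ hlim' => Stmt15.JJ_limit hv hc hlim'
  · exact Stmt15.JJ_zero hv hc
  · exact Stmt15.JJ_istar_univ hv hc
  · exact fun i _ => Stmt15.JJ_succ hv hc i
  · intro i hi α hα θ
    exact (Stmt15.step_spec hv hc (Stmt15.JJ_isIdeal hv hc i)
      (Stmt15.proper_of_lt_istar hv hc hi)).2.1 α hα θ
  · intro i hi α β hαβ hβ
    exact (Stmt15.step_spec hv hc (Stmt15.JJ_isIdeal hv hc i)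
      (Stmt15.proper_of_lt_istar hv hc hi)).2.2.1 α β hαβ hβ
  · intro i hi g hg
    exact (Stmt15.step_spec hv hc (Stmt15.JJ_isIdeal hv hc i)
      (Stmt15.proper_of_lt_istar hv hc hi)).2.2.2 g hg
  · intro g hg
    obtain ⟨l, hl1, hl2⟩ := Stmt15.gamma_aux hv hc (Stmt15.istar hv hc) le_rfl
      Set.univ (Stmt15.univ_mem_istar hv hc) g hg
    refine ⟨l.length, fun ℓ => l.get ℓ, ?_, ?_⟩
    · intro ℓ
      exact hl1 _ (List.get_mem l ℓ)
    · intro θ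
      obtain ⟨p, hp, hgp⟩ := hl2 θ (Set.mem_univ θ)
      obtain ⟨n, hn⟩ := List.mem_iff_get.mp hp
      refine ⟨n, ?_⟩
      show g θ < (Stmt15.step hv hc (Stmt15.JJ hv hc (l.get n).1)).2.2 (l.get n).2 θ
      rw [hn]
      exact hgp
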